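/- arXiv:1012.1938 — 5 statements merged into one kernel-verified Lean document; each statement's English description precedes it below -/
import Mathlib

section
/- For all positive rationals p/q, the inequality 2^{p/q}·(p/q − 2/3) + 2/3 > 0 holds. -/
/-- For all positive rationals `p/q`, `2^(p/q) * (p/q - 2/3) + 2/3 > 0`. -/
theorem stmt1 (p q : ℕ) (hp : 0 < p) (hq : 0 < q) :
    0 < (2:ℝ) ^ ((p:ℝ)/(q:ℝ)) * ((p:ℝ)/(q:ℝ) - 2/3) + 2/3 := by
  set x : ℝ := (p:ℝ)/(q:ℝ) with hxdef
  have hx : 0 < x := div_pos (by exact_mod_cast hp) (by exact_mod_cast hq)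
  rcases le_or_gt (2/3) x with h | h
  · have h1 : (0:ℝ) < 2 ^ x := Real.rpow_pos_of_pos two_pos x
    nlinarith [mul_nonneg h1.le (sub_nonneg.2 h)]
  · have hl2 : Real.log 2 < 0.6931471808 := Real.log_two_lt_d9
    have hl2' : 0 < Real.log 2 := Real.log_pos one_lt_two
    have ht : 0 < x * Real.log 2 := mul_pos hx hl2'
    have hexp : 1 - x * Real.log 2 < Real.exp (-(x * Real.log 2)) := by
      have := Real.add_one_lt_exp (x := -(x * Real.log 2)) (by linarith)
      linarith
    have hrw : (2:ℝ) ^ x = Real.exp (x * Real.log 2) := by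
      rw [Real.rpow_def_of_pos two_pos, mul_comm]
    have hpos : 0 < Real.exp (x * Real.log 2) := Real.exp_pos _
    have hinv : Real.exp (x * Real.log 2) * (1 - x * Real.log 2) < 1 := by
      have hne := Real.exp_neg (x * Real.log 2)
      rw [hne] at hexp
      calc Real.exp (x * Real.log 2) * (1 - x * Real.log 2)
          < Real.exp (x * Real.log 2) * (Real.exp (x * Real.log 2))⁻¹ :=
            mul_lt_mul_of_pos_left hexp hpos
        _ = 1 := mul_inv_cancel₀ hpos.ne'
    have hsub : (2/3 - x) < (2/3) * (1 - x * Real.log 2) := by nlinarith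
    have hmul : Real.exp (x * Real.log 2) * (2/3 - x)
        < Real.exp (x * Real.log 2) * ((2/3) * (1 - x * Real.log 2)) :=
      mul_lt_mul_of_pos_left hsub hpos
    rw [hrw]
    nlinarith [hmul, hinv]
end

section
/- Let G be a congestion game with variable demands and affine cost functions c_r(ℓ) = a_r·ℓ + b_r with a_r > 0, b_r ≥ 0. Then the function P(x,d) = Σ_{i∈N} [ U_i(d_i) − Σ_{r∈x_i} c_r(Σ_{j≤i: r∈x_j} d_j)·d_i ] is an exact potential: for any single player k deviating from (x_k,d_k) to (y_k,Δ_k) while others stay fixed, P(y,Δ) − P(x,d) = π_k(y,Δ) − π_k(x,d). -/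
open Finset

namespace Stmt4

/-- Load `ℓ_r(x,d) = Σ_{j : r ∈ x_j} d_j`. -/
noncomputable def load {n : ℕ} {R : Type*} [Fintype R] [DecidableEq R]
    (x : Fin n → Finset R) (d : Fin n → ℝ) (r : R) : ℝ :=
  ∑ j, if r ∈ x j then d j else 0

/-- Payoff `π_i(x,d) = U_i(d_i) - d_i Σ_{r ∈ x_i} (a_r ℓ_r(x,d) + b_r)` with affine costs. -/
noncomputable def payoff {n : ℕ} {R : Type*} [Fintype R] [DecidableEq R]
    (a b : R → ℝ) (U : Fin n → ℝ → ℝ) (x : Fin n → Finset R) (d : Fin n → ℝ)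
    (i : Fin n) : ℝ :=
  U i (d i) - d i * ∑ r ∈ x i, (a r * load x d r + b r)

/-- Rosenthal-type potential
`P(x,d) = Σ_i [U_i(d_i) - Σ_{r ∈ x_i} c_r(Σ_{j ≤ i, r ∈ x_j} d_j) · d_i]`. -/
noncomputable def pot {n : ℕ} {R : Type*} [Fintype R] [DecidableEq R]
    (a b : R → ℝ) (U : Fin n → ℝ → ℝ) (x : Fin n → Finset R) (d : Fin n → ℝ) : ℝ :=
  ∑ i, (U i (d i) -
    ∑ r ∈ x i, (a r * (∑ j, if j ≤ i ∧ r ∈ x j then d j else 0) + b r) * d i)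

/-- Auxiliary quadratic form `Q g = Σ_i Σ_{j ≤ i} g i · g j`. -/
noncomputable def Q {n : ℕ} (g : Fin n → ℝ) : ℝ :=
  ∑ i, ∑ j, if j ≤ i then g i * g j else 0

lemma half_square {n : ℕ} (f : Fin n → ℝ) :
    Q f = ((∑ i, f i)^2 + ∑ i, (f i)^2)/2 := by
  have h1 : (∑ i, f i)^2 = ∑ i, ∑ j, f i * f j := by
    rw [sq, Finset.sum_mul_sum]
  have h2 : ∑ i, ∑ j, f i * f j
      = (∑ i, ∑ j, (if j ≤ i then f i * f j else 0))
        + ∑ i, ∑ j, (if i < j then f i * f j else 0) := by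
    rw [← Finset.sum_add_distrib]
    apply Finset.sum_congr rfl; intro i _
    rw [← Finset.sum_add_distrib]
    apply Finset.sum_congr rfl; intro j _
    rcases le_or_gt j i with h | h
    · simp [h, not_lt.mpr h]
    · simp [not_le.mpr h, h]
  have h3 : ∑ i, ∑ j, (if i < j then f i * f j else 0)
      = ∑ i, ∑ j, (if j < i then f i * f j else 0) := by
    rw [Finset.sum_comm]
    apply Finset.sum_congr rfl; intro i _
    apply Finset.sum_congr rfl; intro j _
    rcases lt_or_ge j i with h | h
    · simp [h, mul_comm]
    · simp [not_lt.mpr h]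
  have h4 : ∑ i, ∑ j, (if j ≤ i then f i * f j else 0)
      = (∑ i, ∑ j, (if j < i then f i * f j else 0)) + ∑ i, (f i)^2 := by
    rw [← Finset.sum_add_distrib]
    apply Finset.sum_congr rfl; intro i _
    have : ∀ j : Fin n, (if j ≤ i then f i * f j else 0)
        = (if j < i then f i * f j else 0) + (if j = i then f i * f j else 0) := by
      intro j
      rcases lt_trichotomy j i with h|h|h
      · simp [h.le, h, h.ne]
      · simp [h]
      · simp [not_le.mpr h, (not_lt.mpr h.le), h.ne']
    simp_rw [this, Finset.sum_add_distrib]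
    congr 1
    rw [Finset.sum_ite_eq' Finset.univ i (fun j => f i * f j)]
    simp [sq]
  have hQ : Q f = ∑ i, ∑ j, (if j ≤ i then f i * f j else 0) := rfl
  rw [hQ]
  linarith [h1, h2, h3, h4]

lemma sum_update {n : ℕ} (f : Fin n → ℝ) (k : Fin n) (v : ℝ) :
    ∑ i, Function.update f k v i = ∑ i, f i - f k + v := by
  have h := Finset.sum_update_of_mem (Finset.mem_univ k) f v
  have h2 : ∑ i ∈ Finset.univ \ {k}, f i = (∑ i, f i) - f k := by
    rw [Finset.sum_sdiff_eq_sub (Finset.singleton_subset_iff.mpr (Finset.mem_univ k)),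
      Finset.sum_singleton]
  rw [h, h2]; ring

lemma Q_update {n : ℕ} (f : Fin n → ℝ) (k : Fin n) (v : ℝ) :
    Q (Function.update f k v) - Q f
      = v * (∑ i, Function.update f k v i) - f k * (∑ i, f i) := by
  have hsq : ∀ i, (Function.update f k v i)^2
      = Function.update (fun i => (f i)^2) k (v^2) i := by
    intro i; by_cases h : i = k <;> simp [Function.update_apply, h]
  rw [half_square, half_square, sum_update]
  simp_rw [hsq]
  rw [sum_update]
  ring

lemma pot_eq {n : ℕ} {R : Type*} [Fintype R] [DecidableEq R]
    (a b : R → ℝ) (U : Fin n → ℝ → ℝ) (x : Fin n → Finset R) (d : Fin n → ℝ) :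
    pot a b U x d = (∑ i, U i (d i))
      - ∑ r, (a r * Q (fun i => if r ∈ x i then d i else 0)
              + b r * ∑ i, (if r ∈ x i then d i else 0)) := by
  rw [pot, Finset.sum_sub_distrib]
  congr 1
  have key : ∀ i : Fin n,
      ∑ r ∈ x i, (a r * (∑ j, if j ≤ i ∧ r ∈ x j then d j else 0) + b r) * d i
      = ∑ r, (a r * (∑ j, if j ≤ i then
            (if r ∈ x i then d i else 0) * (if r ∈ x j then d j else 0) else 0)
          + b r * (if r ∈ x i then d i else 0)) := by
    intro i
    rw [← Finset.sum_subset (Finset.subset_univ (x i))]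
    · apply Finset.sum_congr rfl
      intro r hr
      simp only [hr, if_true]
      have : ∀ j : Fin n, (if j ≤ i then d i * (if r ∈ x j then d j else 0) else 0)
          = d i * (if j ≤ i ∧ r ∈ x j then d j else 0) := by
        intro j
        rcases em (j ≤ i) with h | h <;> rcases em (r ∈ x j) with h2 | h2 <;>
          simp [h, h2]
      simp_rw [this, ← Finset.mul_sum]
      ring
    · intro r _ hr
      simp [hr]
  simp_rw [key]
  rw [Finset.sum_comm]
  apply Finset.sum_congr rfl
  intro r _
  rw [Finset.sum_add_distrib, ← Finset.mul_sum, ← Finset.mul_sum]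
  rfl

lemma pay_sum {n : ℕ} {R : Type*} [Fintype R] [DecidableEq R]
    (a b : R → ℝ) (x0 : Fin n → Finset R) (d0 : Fin n → ℝ) (k : Fin n) :
    d0 k * ∑ r ∈ x0 k, (a r * load x0 d0 r + b r)
      = ∑ r, (a r * ((if r ∈ x0 k then d0 k else 0) * load x0 d0 r)
              + b r * (if r ∈ x0 k then d0 k else 0)) := by
  rw [Finset.mul_sum, ← Finset.sum_subset (Finset.subset_univ (x0 k))]
  · apply Finset.sum_congr rfl
    intro r hr
    simp only [hr, if_true]
    ring
  · intro r _ hr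
    simp [hr]

/-- In a congestion game with variable demands and affine costs `c_r(ℓ) = a_r ℓ + b_r`
(`a_r > 0`, `b_r ≥ 0`), `P` is an exact potential: for any unilateral deviation of
player `k` from `(x_k, d_k)` to `(y_k, Δ_k)`,
`P(y,Δ) - P(x,d) = π_k(y,Δ) - π_k(x,d)`. -/
theorem stmt4 {n : ℕ} {R : Type*} [Fintype R] [DecidableEq R]
    (a b : R → ℝ) (ha : ∀ r, 0 < a r) (hb : ∀ r, 0 ≤ b r)
    (U : Fin n → ℝ → ℝ) (x : Fin n → Finset R) (d : Fin n → ℝ)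
    (k : Fin n) (y : Finset R) (Δ : ℝ) :
    pot a b U (Function.update x k y) (Function.update d k Δ) - pot a b U x d =
      payoff a b U (Function.update x k y) (Function.update d k Δ) k -
        payoff a b U x d k := by
  set x' := Function.update x k y with hx'
  set d' := Function.update d k Δ with hd'
  have hf : ∀ r : R, (fun i => if r ∈ x' i then d' i else 0)
      = Function.update (fun i => if r ∈ x i then d i else 0) k
          (if r ∈ y then Δ else 0) := by
    intro r; funext i
    by_cases h : i = k
    · subst h; simp [hx', hd']
    · simp [hx', hd', Function.update_apply, h]
  have hU : (∑ i, U i (d' i)) - (∑ i, U i (d i)) = U k Δ - U k (d k) := by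
    rw [← Finset.sum_sub_distrib, Finset.sum_eq_single k]
    · simp [hd']
    · intro i _ hik; simp [hd', Function.update_apply, hik]
    · simp
  have hA : ∀ r : R,
      (a r * Q (fun i => if r ∈ x' i then d' i else 0)
        + b r * ∑ i, (if r ∈ x' i then d' i else 0))
      - (a r * Q (fun i => if r ∈ x i then d i else 0)
        + b r * ∑ i, (if r ∈ x i then d i else 0))
      = (a r * ((if r ∈ y then Δ else 0) * load x' d' r)
          + b r * (if r ∈ y then Δ else 0))
        - (a r * ((if r ∈ x k then d k else 0) * load x d r)
          + b r * (if r ∈ x k then d k else 0)) := by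
    intro r
    have hQ := Q_update (fun i => if r ∈ x i then d i else 0) k (if r ∈ y then Δ else 0)
    have hS := sum_update (fun i => if r ∈ x i then d i else 0) k (if r ∈ y then Δ else 0)
    have hload' : load x' d' r = ∑ i, Function.update
        (fun i => if r ∈ x i then d i else 0) k (if r ∈ y then Δ else 0) i := by
      rw [load]; simp_rw [← hf r]
    have hload : load x d r = ∑ i, (if r ∈ x i then d i else 0) := rfl
    rw [hf r, hload', hload]
    linear_combination a r * hQ + b r * hS
  rw [pot_eq, pot_eq, payoff, payoff]
  have hxk : x' k = y := by simp [hx']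
  have hdk : d' k = Δ := by simp [hd']
  have hp' := pay_sum a b x' d' k
  rw [hxk, hdk] at hp'
  have hp := pay_sum a b x d k
  rw [hxk, hdk, hp', hp]
  have hsum : (∑ r, (a r * Q (fun i => if r ∈ x' i then d' i else 0)
        + b r * ∑ i, (if r ∈ x' i then d' i else 0)))
      - (∑ r, (a r * Q (fun i => if r ∈ x i then d i else 0)
        + b r * ∑ i, (if r ∈ x i then d i else 0)))
      = (∑ r, (a r * ((if r ∈ y then Δ else 0) * load x' d' r)
          + b r * (if r ∈ y then Δ else 0)))
        - ∑ r, (a r * ((if r ∈ x k then d k else 0) * load x d r)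
          + b r * (if r ∈ x k then d k else 0)) := by
    rw [← Finset.sum_sub_distrib, ← Finset.sum_sub_distrib]
    exact Finset.sum_congr rfl fun r _ => hA r
  linarith [hU, hsum]

end Stmt4
end

section
/- Let G be a congestion game with variable demands and homogeneously exponential costs c_r(ℓ) = a_r·e^{φℓ}, a_r > 0, φ > 0. Define Φ(x,d) = Σ_{i∈N} ∫₀^{d_i} U_i'(s)/(φs+1) ds − Σ_{r∈R} c_r(ℓ_r(x,d)). If player k strictly improves her payoff by changing only her configuration from x_k to y_k (keeping d_k fixed and d_k > 0), then Φ((y_k,d_k), x̄_{−k}) > Φ((x_k,d_k), x̄_{−k}); specifically Φ((y_k,d_k),x̄_{−k}) − Φ((x_k,d_k),x̄_{−k}) = (1/d_k − 1/(d_k·e^{φd_k}))·(π_k((y_k,d_k),x̄_{−k}) − π_k((x_k,d_k),x̄_{−k})). -/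
open Finset

namespace Stmt7

/-- Load `ℓ_r(x,d) = Σ_{j : r ∈ x_j} d_j`. -/
noncomputable def load {ι R : Type*} [Fintype ι] [DecidableEq R]
    (x : ι → Finset R) (d : ι → ℝ) (r : R) : ℝ :=
  ∑ j, if r ∈ x j then d j else 0

/-- Payoff with homogeneously exponential costs:
`π_i(x,d) = U_i(d_i) - d_i Σ_{r ∈ x_i} a_r e^(φ ℓ_r(x,d))`. -/
noncomputable def payoff {ι R : Type*} [Fintype ι] [DecidableEq R]
    (a : R → ℝ) (φ : ℝ) (U : ι → ℝ → ℝ) (x : ι → Finset R) (d : ι → ℝ) (i : ι) : ℝ :=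
  U i (d i) - d i * ∑ r ∈ x i, a r * Real.exp (φ * load x d r)

/-- The local essential potential
`Φ(x,d) = Σ_i ∫₀^{d_i} U_i'(s)/(φ s + 1) ds - Σ_{r ∈ R} a_r e^(φ ℓ_r(x,d))`. -/
noncomputable def Phi {ι R : Type*} [Fintype ι] [Fintype R] [DecidableEq R]
    (a : R → ℝ) (φ : ℝ) (U' : ι → ℝ → ℝ) (x : ι → Finset R) (d : ι → ℝ) : ℝ :=
  (∑ i, ∫ s in (0:ℝ)..(d i), U' i s / (φ * s + 1)) -
    ∑ r, a r * Real.exp (φ * load x d r)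

/-- With homogeneously exponential costs, if player `k` strictly improves her payoff by
changing only her configuration from `x_k` to `y_k` (with fixed demand `d_k > 0`), then
`Φ` strictly increases; specifically the change in `Φ` equals
`(1/d_k - 1/(d_k e^(φ d_k)))` times the change in her payoff. -/
theorem stmt7 {ι R : Type*} [Fintype ι] [Fintype R] [DecidableEq ι] [DecidableEq R]
    (a : R → ℝ) (ha : ∀ r, 0 < a r) (φ : ℝ) (hφ : 0 < φ)
    (U U' : ι → ℝ → ℝ) (hU' : ∀ i t, HasDerivAt (U i) (U' i t) t)
    (x : ι → Finset R) (d : ι → ℝ) (hd : ∀ j, 0 ≤ d j)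
    (k : ι) (y : Finset R) (hdk : 0 < d k)
    (himp : payoff a φ U x d k < payoff a φ U (Function.update x k y) d k) :
    Phi a φ U' (Function.update x k y) d - Phi a φ U' x d =
      (1 / d k - 1 / (d k * Real.exp (φ * d k))) *
        (payoff a φ U (Function.update x k y) d k - payoff a φ U x d k) ∧
    Phi a φ U' x d < Phi a φ U' (Function.update x k y) d := by
  classical
  set e := Real.exp (φ * d k) with he
  have he0 : (0:ℝ) < e := Real.exp_pos _
  have he1 : 1 < e := Real.one_lt_exp_iff.mpr (by positivity)
  have hdk' : d k ≠ 0 := ne_of_gt hdk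
  have hload : ∀ r, load (Function.update x k y) d r =
      load x d r + ((if r ∈ y then d k else 0) - (if r ∈ x k then d k else 0)) := by
    intro r
    unfold load
    have hpt : ∀ j : ι, (if r ∈ Function.update x k y j then d j else 0) =
        (if r ∈ x j then d j else 0) +
          (if j = k then (if r ∈ y then d k else 0) - (if r ∈ x k then d k else 0) else 0) := by
      intro j
      by_cases hj : j = k
      · subst hj
        simp only [Function.update_self, if_pos rfl]
        split_ifs <;> ring
      · simp [Function.update_of_ne hj, hj]
    rw [Finset.sum_congr rfl fun j _ => hpt j, Finset.sum_add_distrib,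
      Finset.sum_ite_eq' Finset.univ k]
    simp
  set F : R → ℝ :=
    fun r => a r * Real.exp (φ * (load x d r - (if r ∈ x k then d k else 0))) with hF
  have hEx : ∀ r, a r * Real.exp (φ * load x d r) = F r * (if r ∈ x k then e else 1) := by
    intro r
    simp only [hF]
    by_cases h : r ∈ x k
    · rw [if_pos h, if_pos h, he,
        show φ * load x d r = φ * (load x d r - d k) + φ * d k by ring, Real.exp_add]
      ring
    · rw [if_neg h, if_neg h, mul_one, sub_zero]
  have hEy : ∀ r, a r * Real.exp (φ * load (Function.update x k y) d r) =
      F r * (if r ∈ y then e else 1) := by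
    intro r
    rw [hload r]; simp only [hF]
    by_cases hy : r ∈ y <;> by_cases hx : r ∈ x k <;>
      simp only [hy, hx, if_true, if_false, ite_true, ite_false]
    · rw [show φ * (load x d r + (d k - d k)) = φ * (load x d r - d k) + φ * d k by ring,
        Real.exp_add, he]
      ring
    · rw [show φ * (load x d r + (d k - 0)) = φ * (load x d r - 0) + φ * d k by ring,
        Real.exp_add, he]
      ring
    · rw [show φ * (load x d r + (0 - d k)) = φ * (load x d r - d k) by ring, mul_one]
    · rw [show φ * (load x d r + (0 - 0)) = φ * (load x d r - 0) by ring, mul_one]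
  set T : ℝ := ∑ r, F r * ((if r ∈ x k then (1:ℝ) else 0) - (if r ∈ y then 1 else 0)) with hT
  have hΦ : Phi a φ U' (Function.update x k y) d - Phi a φ U' x d = (e - 1) * T := by
    unfold Phi
    rw [Finset.sum_congr rfl fun r (_ : r ∈ Finset.univ) => hEx r,
      Finset.sum_congr rfl fun r (_ : r ∈ Finset.univ) => hEy r, hT, Finset.mul_sum]
    rw [show ∀ A B C : ℝ, A - B - (A - C) = C - B from fun A B C => by ring]
    rw [← Finset.sum_sub_distrib]
    refine Finset.sum_congr rfl fun r _ => ?_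
    split_ifs <;> ring
  have hsum : ∀ (s : Finset R) (g : R → ℝ), ∑ r ∈ s, g r = ∑ r, if r ∈ s then g r else 0 := by
    intro s g
    rw [Finset.sum_ite_mem, Finset.univ_inter]
  have hy' : ∑ r ∈ y, a r * Real.exp (φ * load (Function.update x k y) d r)
      = ∑ r, (if r ∈ y then F r * e else 0) := by
    rw [← hsum y]
    exact Finset.sum_congr rfl fun r hr => by rw [hEy r, if_pos hr]
  have hx' : ∑ r ∈ x k, a r * Real.exp (φ * load x d r)
      = ∑ r, (if r ∈ x k then F r * e else 0) := by
    rw [← hsum (x k)]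
    exact Finset.sum_congr rfl fun r hr => by rw [hEx r, if_pos hr]
  have hπ : payoff a φ U (Function.update x k y) d k - payoff a φ U x d k = d k * e * T := by
    unfold payoff
    rw [Function.update_self, hy', hx']
    rw [show ∀ A B C : ℝ, A - d k * B - (A - d k * C) = d k * (C - B) from
      fun A B C => by ring, mul_assoc]
    congr 1
    rw [← Finset.sum_sub_distrib, hT, Finset.mul_sum]
    refine Finset.sum_congr rfl fun r _ => ?_
    split_ifs <;> ring
  have hT0 : 0 < T := by
    have h1 : 0 < d k * e * T := by rw [← hπ]; linarith
    nlinarith [mul_pos hdk he0]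
  constructor
  · rw [hΦ, hπ]
    field_simp
  · have h2 : 0 < (e - 1) * T := mul_pos (by linarith) hT0
    linarith [hΦ]

end Stmt7
end

section
/- If C is a set of cost functions consistent with congestion games with variable demands (every such game with costs in C and concave non-decreasing differentiable utilities has a PNE), then every c ∈ C has unbounded marginal total cost: c(x) + x·c'(x) → ∞ as x → ∞. Equivalently, if c(x) + x·c'(x) < M for all x, then the one-player game with a single resource, cost c, and utility U(x) = (M+1)x has no pure Nash equilibrium. -/
/-- If `c` is a non-negative, strictly increasing, differentiable cost function with
bounded marginal total cost `c(x) + x c'(x) < M`, then the one-player congestion game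
with variable demand, a single resource with cost `c`, and utility `U(x) = (M+1) x`
has no pure Nash equilibrium (i.e. the payoff `(M+1) d - d c(d)` has no maximizer on `ℝ≥0`). -/
theorem stmt11 (c c' : ℝ → ℝ) (M : ℝ)
    (hderiv : ∀ t : ℝ, HasDerivAt c (c' t) t)
    (hnn : ∀ x : ℝ, 0 ≤ x → 0 ≤ c x)
    (hmono : StrictMonoOn c (Set.Ici 0))
    (hM : ∀ x : ℝ, 0 ≤ x → c x + x * c' x < M) :
    ¬ ∃ d : ℝ, 0 ≤ d ∧ ∀ e : ℝ, 0 ≤ e →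
      (M + 1) * e - e * c e ≤ (M + 1) * d - d * c d := by
  rintro ⟨d, hd, hmax⟩
  set f : ℝ → ℝ := fun x => (M + 1) * x - x * c x with hf
  have hfd : ∀ x : ℝ, HasDerivAt f (M + 1 - (c x + x * c' x)) x := by
    intro x
    have h1 : HasDerivAt (fun x : ℝ => (M + 1) * x) (M + 1) x := by
      simpa using (hasDerivAt_id x).const_mul (M + 1)
    have h2 : HasDerivAt (fun x : ℝ => x * c x) (1 * c x + x * c' x) x :=
      (hasDerivAt_id x).mul (hderiv x)
    have h3 := h1.sub h2
    rw [one_mul] at h3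
    exact h3
  have hsm : StrictMonoOn f (Set.Ici (0 : ℝ)) := by
    apply strictMonoOn_of_deriv_pos (convex_Ici 0)
    · exact (fun x _ => ((hfd x).differentiableAt.continuousAt.continuousWithinAt))
    · intro x hx
      rw [interior_Ici] at hx
      rw [(hfd x).deriv]
      have := hM x (le_of_lt hx)
      linarith
  have h1 : f d < f (d + 1) := hsm (Set.mem_Ici.2 hd) (Set.mem_Ici.2 (by linarith)) (by linarith)
  have h2 := hmax (d + 1) (by linarith)
  have h1' : (M + 1) * d - d * c d < (M + 1) * (d + 1) - (d + 1) * c (d + 1) := h1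
  linarith
end

section
/- In the two-player uniform congestion game with variable demands of Example 4 (46 resources, identity cost c(ℓ)=ℓ, strategy sets and utility values U₁(0)=0, U₁(1)=32, U₁(2)=53, U₂(0)=0, U₂(1)=32, U₂(2)=46 as specified), the four payoff differences along the cycle each equal 1: π₁((R₂₁∪R₂₂,2),(R₂₁∪R₀₁,1)) − π₁((R₁₂∪R₁₀,1),(R₂₁∪R₀₁,1)) = 1, and similarly for the other three deviations, so none of the four profiles with positive demands is a pure Nash equilibrium. -/
open Finset

namespace Stmt17

/-- Resource block `R₁₂` (4 resources). -/
def R12 : Finset (Fin 46) := filter (fun r => r.val < 4) univ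
/-- Resource block `R₁₀` (18 resources). -/
def R10 : Finset (Fin 46) := filter (fun r => 4 ≤ r.val ∧ r.val < 22) univ
/-- Resource block `R₂₁` (8 resources). -/
def R21 : Finset (Fin 46) := filter (fun r => 22 ≤ r.val ∧ r.val < 30) univ
/-- Resource block `R₂₂` (9 resources). -/
def R22 : Finset (Fin 46) := filter (fun r => 30 ≤ r.val ∧ r.val < 39) univ
/-- Resource block `R₀₁` (7 resources). -/
def R01 : Finset (Fin 46) := filter (fun r => 39 ≤ r.val ∧ r.val < 46) univ

/-- Load on resource `r` with identity costs. -/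
def loadR (s1 : Finset (Fin 46)) (d1 : ℝ) (s2 : Finset (Fin 46)) (d2 : ℝ)
    (r : Fin 46) : ℝ :=
  (if r ∈ s1 then d1 else 0) + (if r ∈ s2 then d2 else 0)

/-- Uniform-cost payoff of player 1: `U₁(d₁) - Σ_{r ∈ s1} ℓ_r`. -/
noncomputable def pay1 (U1 : ℝ → ℝ) (s1 : Finset (Fin 46)) (d1 : ℝ)
    (s2 : Finset (Fin 46)) (d2 : ℝ) : ℝ :=
  U1 d1 - ∑ r ∈ s1, loadR s1 d1 s2 d2 r

/-- Uniform-cost payoff of player 2: `U₂(d₂) - Σ_{r ∈ s2} ℓ_r`. -/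
noncomputable def pay2 (U2 : ℝ → ℝ) (s1 : Finset (Fin 46)) (d1 : ℝ)
    (s2 : Finset (Fin 46)) (d2 : ℝ) : ℝ :=
  U2 d2 - ∑ r ∈ s2, loadR s1 d1 s2 d2 r

/-- The profile `(s1,d1,s2,d2)` admits a profitable unilateral deviation
(player 1's configurations are `R₁₂∪R₁₀` and `R₂₁∪R₂₂`, player 2's are
`R₂₁∪R₀₁` and `R₁₂∪R₂₂`; demands range over `ℝ≥0`). -/
def notPNE (U1 U2 : ℝ → ℝ) (s1 : Finset (Fin 46)) (d1 : ℝ)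
    (s2 : Finset (Fin 46)) (d2 : ℝ) : Prop :=
  (∃ t1 ∈ ({R12 ∪ R10, R21 ∪ R22} : Set (Finset (Fin 46))), ∃ e1 : ℝ, 0 ≤ e1 ∧
    pay1 U1 s1 d1 s2 d2 < pay1 U1 t1 e1 s2 d2) ∨
  (∃ t2 ∈ ({R21 ∪ R01, R12 ∪ R22} : Set (Finset (Fin 46))), ∃ e2 : ℝ, 0 ≤ e2 ∧
    pay2 U2 s1 d1 s2 d2 < pay2 U2 s1 d1 t2 e2)

lemma sum_load (s s1 s2 : Finset (Fin 46)) (d1 d2 : ℝ) :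
    ∑ r ∈ s, loadR s1 d1 s2 d2 r
      = (s ∩ s1).card * d1 + (s ∩ s2).card * d2 := by
  simp [loadR, Finset.sum_add_distrib, ← Finset.sum_filter,
    Finset.filter_mem_eq_inter, mul_comm]

lemma cAA : ((R12 ∪ R10) ∩ (R12 ∪ R10)).card = 22 := by decide
lemma cAC : ((R12 ∪ R10) ∩ (R21 ∪ R01)).card = 0 := by decide
lemma cAD : ((R12 ∪ R10) ∩ (R12 ∪ R22)).card = 4 := by decide
lemma cBB : ((R21 ∪ R22) ∩ (R21 ∪ R22)).card = 17 := by decide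
lemma cBC : ((R21 ∪ R22) ∩ (R21 ∪ R01)).card = 8 := by decide
lemma cBD : ((R21 ∪ R22) ∩ (R12 ∪ R22)).card = 9 := by decide
lemma cCC : ((R21 ∪ R01) ∩ (R21 ∪ R01)).card = 15 := by decide
lemma cCB : ((R21 ∪ R01) ∩ (R21 ∪ R22)).card = 8 := by decide
lemma cCA : ((R21 ∪ R01) ∩ (R12 ∪ R10)).card = 0 := by decide
lemma cDD : ((R12 ∪ R22) ∩ (R12 ∪ R22)).card = 13 := by decide
lemma cDB : ((R12 ∪ R22) ∩ (R21 ∪ R22)).card = 9 := by decide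
lemma cDA : ((R12 ∪ R22) ∩ (R12 ∪ R10)).card = 4 := by decide

/-- In the two-player uniform congestion game with variable demands on 46 resources
with identity costs and the specified utility values, the four payoff differences along
the improvement cycle each equal 1, so none of the four profiles with positive demands
is a pure Nash equilibrium. -/
theorem stmt17 (U1 U2 : ℝ → ℝ)
    (h10 : U1 0 = 0) (h11 : U1 1 = 32) (h12 : U1 2 = 53)
    (h20 : U2 0 = 0) (h21 : U2 1 = 32) (h22 : U2 2 = 46) :
    pay1 U1 (R21 ∪ R22) 2 (R21 ∪ R01) 1 - pay1 U1 (R12 ∪ R10) 1 (R21 ∪ R01) 1 = 1 ∧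
    pay2 U2 (R21 ∪ R22) 2 (R12 ∪ R22) 2 - pay2 U2 (R21 ∪ R22) 2 (R21 ∪ R01) 1 = 1 ∧
    pay1 U1 (R12 ∪ R10) 1 (R12 ∪ R22) 2 - pay1 U1 (R21 ∪ R22) 2 (R12 ∪ R22) 2 = 1 ∧
    pay2 U2 (R12 ∪ R10) 1 (R21 ∪ R01) 1 - pay2 U2 (R12 ∪ R10) 1 (R12 ∪ R22) 2 = 1 ∧
    notPNE U1 U2 (R12 ∪ R10) 1 (R21 ∪ R01) 1 ∧
    notPNE U1 U2 (R21 ∪ R22) 2 (R21 ∪ R01) 1 ∧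
    notPNE U1 U2 (R21 ∪ R22) 2 (R12 ∪ R22) 2 ∧
    notPNE U1 U2 (R12 ∪ R10) 1 (R12 ∪ R22) 2 := by
  have e1 : pay1 U1 (R21 ∪ R22) 2 (R21 ∪ R01) 1 = 11 := by
    rw [pay1, sum_load, cBB, cBC, h12]; norm_num
  have e2 : pay1 U1 (R12 ∪ R10) 1 (R21 ∪ R01) 1 = 10 := by
    rw [pay1, sum_load, cAA, cAC, h11]; norm_num
  have e3 : pay2 U2 (R21 ∪ R22) 2 (R12 ∪ R22) 2 = 2 := by
    rw [pay2, sum_load, cDB, cDD, h22]; norm_num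
  have e4 : pay2 U2 (R21 ∪ R22) 2 (R21 ∪ R01) 1 = 1 := by
    rw [pay2, sum_load, cCB, cCC, h21]; norm_num
  have e5 : pay1 U1 (R12 ∪ R10) 1 (R12 ∪ R22) 2 = 2 := by
    rw [pay1, sum_load, cAA, cAD, h11]; norm_num
  have e6 : pay1 U1 (R21 ∪ R22) 2 (R12 ∪ R22) 2 = 1 := by
    rw [pay1, sum_load, cBB, cBD, h12]; norm_num
  have e7 : pay2 U2 (R12 ∪ R10) 1 (R21 ∪ R01) 1 = 17 := by
    rw [pay2, sum_load, cCA, cCC, h21]; norm_num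
  have e8 : pay2 U2 (R12 ∪ R10) 1 (R12 ∪ R22) 2 = 16 := by
    rw [pay2, sum_load, cDA, cDD, h22]; norm_num
  refine ⟨by rw [e1, e2]; norm_num, by rw [e3, e4]; norm_num,
    by rw [e5, e6]; norm_num, by rw [e7, e8]; norm_num, ?_, ?_, ?_, ?_⟩
  · exact Or.inl ⟨R21 ∪ R22, Or.inr rfl, 2, by norm_num, by rw [e1, e2]; norm_num⟩
  · exact Or.inr ⟨R12 ∪ R22, Or.inr rfl, 2, by norm_num, by rw [e3, e4]; norm_num⟩
  · exact Or.inl ⟨R12 ∪ R10, Or.inl rfl, 1, by norm_num, by rw [e5, e6]; norm_num⟩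
  · exact Or.inr ⟨R21 ∪ R01, Or.inl rfl, 1, by norm_num, by rw [e7, e8]; norm_num⟩


end Stmt17
end
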